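/- Let 0 < α < 1 and λ > 0. For every natural number n, the function t ↦ p^α(n,t) := ((λ t^α)^n/n!) Σ_{k=0}^∞ ((k+n)!/k!) · (-λ t^α)^k / Γ((k+n)α+1) satisfies, for all t > 0, the Caputo fractional equation ∂^α_t p^α(n,t) = -λ (p^α(n,t) - p^α(n-1,t)) (with the convention p^α(-1,t) = 0), together with the initial conditions p^α(0,0) = 1 and p^α(n,0) = 0 for n ≥ 1. -/

import Mathlib

open Real

/-- Caputo fractional derivative of order `0 < α < 1`. -/
noncomputable def caputo (α : ℝ) (f : ℝ → ℝ) (t : ℝ) : ℝ :=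
  (1 / Real.Gamma (1 - α)) * ∫ s in (0:ℝ)..t, (t - s) ^ (-α) * deriv f s

/-- State probabilities of the time fractional Poisson process (Laskin's form). -/
noncomputable def pTF (α lam : ℝ) (n : ℕ) (t : ℝ) : ℝ :=
  ((lam * t ^ α) ^ n / n.factorial) * ∑' k : ℕ,
    (((k + n).factorial : ℝ) / k.factorial) * (-(lam * t ^ α)) ^ k /
      Real.Gamma (((k : ℝ) + n) * α + 1)

lemma gamma_ratio {α : ℝ} (hα0 : 0 < α) (hα1 : α < 1) {x : ℝ} (hx : 1 < x) :
    Real.Gamma x * (x + α - 1) ^ α ≤ Real.Gamma (x + α) := by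
  have h1 : (0:ℝ) < x + α - 1 := by linarith
  have h2 : (0:ℝ) < x + α := by linarith
  have hx0 : (0:ℝ) < x := by linarith
  have hcvx := Real.convexOn_log_Gamma.2 (Set.mem_Ioi.2 h1) (Set.mem_Ioi.2 h2)
    (le_of_lt hα0) (by linarith : (0:ℝ) ≤ 1 - α) (by ring)
  have hcomb : α • (x + α - 1) + (1 - α) • (x + α) = x := by
    simp only [smul_eq_mul]; ring
  rw [hcomb] at hcvx
  -- hcvx : log (Gamma x) ≤ α * log (Gamma (x+α-1)) + (1-α) * log (Gamma (x+α))
  simp only [Function.comp, smul_eq_mul] at hcvx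
  have hG1 : Real.Gamma (x + α) = (x + α - 1) * Real.Gamma (x + α - 1) := by
    have := Real.Gamma_add_one (s := x + α - 1) (ne_of_gt h1)
    rw [show x + α - 1 + 1 = x + α by ring] at this
    exact this
  have hGp1 : 0 < Real.Gamma (x + α - 1) := Real.Gamma_pos_of_pos h1
  have hGp2 : 0 < Real.Gamma (x + α) := Real.Gamma_pos_of_pos h2
  have hGpx : 0 < Real.Gamma x := Real.Gamma_pos_of_pos hx0
  have hlog : Real.log (Real.Gamma (x + α - 1)) = Real.log (Real.Gamma (x+α)) - Real.log (x+α-1) := by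
    rw [hG1, Real.log_mul (ne_of_gt h1) (ne_of_gt hGp1)]; ring
  rw [hlog] at hcvx
  have key : Real.log (Real.Gamma x) + α * Real.log (x + α - 1) ≤ Real.log (Real.Gamma (x+α)) := by
    nlinarith [hcvx]
  have : Real.log (Real.Gamma x * (x + α - 1) ^ α) ≤ Real.log (Real.Gamma (x+α)) := by
    rw [Real.log_mul (ne_of_gt hGpx) (ne_of_gt (Real.rpow_pos_of_pos h1 α)),
      Real.log_rpow h1]
    exact key
  exact (Real.log_le_log_iff (by positivity) hGp2).1 this

lemma ML {α : ℝ} (hα0 : 0 < α) (hα1 : α < 1) {q : ℝ} (hq : 0 < q) (m : ℕ) {r : ℝ}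
    (hr : 0 ≤ r) :
    Summable (fun k : ℕ => (((k + m).factorial : ℝ) / k.factorial) * r ^ k /
      Real.Gamma ((k : ℝ) * α + q)) := by
  set f : ℕ → ℝ := fun k => (((k + m).factorial : ℝ) / k.factorial) * r ^ k /
      Real.Gamma ((k : ℝ) * α + q) with hf
  apply summable_of_ratio_norm_eventually_le (r := 1/2) (by norm_num)
  -- eventually: kα + q > 1 and ((k+1)α + q - 1)^α ≥ 2 * (m+1) * r
  have h1 : ∀ᶠ k : ℕ in Filter.atTop, (1:ℝ) < (k:ℝ) * α + q := by
    have : Filter.Tendsto (fun k : ℕ => (k:ℝ) * α + q) Filter.atTop Filter.atTop := by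
      exact Filter.tendsto_atTop_add_const_right _ q
        (Filter.Tendsto.atTop_mul_const hα0 tendsto_natCast_atTop_atTop)
    exact this.eventually_gt_atTop 1
  have h2 : ∀ᶠ k : ℕ in Filter.atTop,
      2 * ((m:ℝ)+1) * r ≤ ((k:ℝ) * α + q + α - 1) ^ α := by
    have t1 : Filter.Tendsto (fun k : ℕ => (k:ℝ) * α + q + α - 1) Filter.atTop Filter.atTop := by
      have := Filter.tendsto_atTop_add_const_right Filter.atTop (q + α - 1)
        (Filter.Tendsto.atTop_mul_const hα0 (tendsto_natCast_atTop_atTop (R := ℝ)))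
      convert this using 2 with k
      ring
    exact ((tendsto_rpow_atTop hα0).comp t1).eventually_ge_atTop _
  filter_upwards [h1, h2] with k hk1 hk2
  have hx : (0:ℝ) < (k:ℝ) * α + q := by linarith
  have hGp : 0 < Real.Gamma ((k:ℝ) * α + q) := Real.Gamma_pos_of_pos hx
  have hx1 : (0:ℝ) < (k:ℝ) * α + q + α - 1 := by linarith
  have hGp2 : 0 < Real.Gamma ((k:ℝ) * α + q + α) := Real.Gamma_pos_of_pos (by linarith)
  have hfk : ‖f k‖ = (((k + m).factorial : ℝ) / k.factorial) * r ^ k /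
      Real.Gamma ((k : ℝ) * α + q) := by
    rw [Real.norm_eq_abs, abs_of_nonneg]
    positivity
  have hfk1 : ‖f (k+1)‖ = (((k + 1 + m).factorial : ℝ) / (k+1).factorial) * r ^ (k+1) /
      Real.Gamma (((k:ℝ)+1) * α + q) := by
    rw [hf]
    push_cast
    rw [Real.norm_eq_abs, abs_of_nonneg]
    have : (0:ℝ) < ((k:ℝ)+1) * α + q := by positivity
    have := Real.Gamma_pos_of_pos this
    positivity
  rw [hfk, hfk1]
  have hgr : Real.Gamma ((k:ℝ)*α + q) * ((k:ℝ)*α + q + α - 1) ^ α ≤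
      Real.Gamma (((k:ℝ)+1) * α + q) := by
    rw [show ((k:ℝ)+1)*α + q = (k:ℝ)*α + q + α by ring]
    exact gamma_ratio hα0 hα1 hk1
  have hnum : (((k + 1 + m).factorial : ℝ) / (k+1).factorial) ≤
      ((m:ℝ) + 1) * (((k + m).factorial : ℝ) / k.factorial) := by
    have e1 : (k + 1 + m).factorial = (k + m + 1) * (k + m).factorial := by
      rw [show k + 1 + m = (k + m) + 1 by ring, Nat.factorial_succ]
    have hkf : (0:ℝ) < (k.factorial : ℝ) := by positivity
    have hk1f : (0:ℝ) < ((k+1).factorial : ℝ) := by positivity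
    rw [mul_div_assoc', div_le_div_iff₀ hk1f hkf, e1, Nat.factorial_succ (k)]
    push_cast
    have h1 : ((k:ℝ) + m + 1) ≤ ((m:ℝ) + 1) * ((k:ℝ) + 1) := by
      nlinarith [Nat.cast_nonneg (α := ℝ) k, Nat.cast_nonneg (α := ℝ) m]
    have hF : (0:ℝ) ≤ ((k+m).factorial:ℝ) * k.factorial := by positivity
    nlinarith [mul_le_mul_of_nonneg_right h1 hF]
  calc (((k + 1 + m).factorial : ℝ) / (k+1).factorial) * r ^ (k+1) /
      Real.Gamma (((k:ℝ)+1) * α + q)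
      ≤ (((m:ℝ) + 1) * (((k + m).factorial : ℝ) / k.factorial)) * (r ^ k * r) /
        (Real.Gamma ((k:ℝ)*α + q) * ((k:ℝ)*α + q + α - 1) ^ α) := by
        apply div_le_div₀ (by positivity)
        · rw [pow_succ]
          apply mul_le_mul_of_nonneg_right hnum (by positivity)
        · positivity
        · exact hgr
    _ = (((k + m).factorial : ℝ) / k.factorial) * r ^ k /
        Real.Gamma ((k:ℝ)*α + q) * ((((m:ℝ)+1) * r) / ((k:ℝ)*α + q + α - 1) ^ α) := by
        field_simp
    _ ≤ (((k + m).factorial : ℝ) / k.factorial) * r ^ k /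
        Real.Gamma ((k:ℝ)*α + q) * (1/2) := by
        apply mul_le_mul_of_nonneg_left _ (by positivity)
        rw [div_le_iff₀ (by positivity)]
        nlinarith [hk2]
    _ = 1/2 * ((((k + m).factorial : ℝ) / k.factorial) * r ^ k /
        Real.Gamma ((k:ℝ)*α + q)) := by ring

noncomputable def Acoef (α lam : ℝ) (n k : ℕ) : ℝ :=
  (((k + n).factorial : ℝ) / (n.factorial * k.factorial)) * lam ^ n * (-lam) ^ k /
    Real.Gamma (((k : ℝ) + n) * α + 1)

lemma pTF_eq {α lam : ℝ} (hα0 : 0 < α) (n : ℕ) {t : ℝ} (ht : 0 ≤ t) :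
    pTF α lam n t = ∑' k : ℕ, Acoef α lam n k * t ^ (((k : ℝ) + n) * α) := by
  rw [pTF, ← tsum_mul_left]
  apply tsum_congr
  intro k
  have hpow : (t ^ α) ^ (n + k) = t ^ (((k:ℝ) + n) * α) := by
    rw [← Real.rpow_natCast (t ^ α) (n + k), ← Real.rpow_mul ht]
    congr 1
    push_cast
    ring
  rw [Acoef, ← hpow, pow_add, mul_pow, show -(lam * t ^ α) = (-lam) * t ^ α by ring, mul_pow]
  field_simp

lemma abs_Acoef {α lam : ℝ} (hα0 : 0 < α) (hlam : 0 < lam) (n k : ℕ) :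
    |Acoef α lam n k| = (((k + n).factorial : ℝ) / (n.factorial * k.factorial)) *
      lam ^ n * lam ^ k / Real.Gamma (((k : ℝ) + n) * α + 1) := by
  have hG : 0 < Real.Gamma (((k : ℝ) + n) * α + 1) := by
    apply Real.Gamma_pos_of_pos; positivity
  rw [Acoef, abs_div, abs_mul, abs_mul, abs_pow, abs_pow, abs_neg,
    abs_of_pos hlam, abs_of_pos hG, abs_of_nonneg (by positivity)]

lemma S1 {α lam : ℝ} (hα0 : 0 < α) (hα1 : α < 1) (hlam : 0 < lam) (n : ℕ) {t : ℝ}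
    (ht : 0 < t) :
    Summable (fun k : ℕ => Acoef α lam n k * t ^ (((k : ℝ) + n) * α)) := by
  apply Summable.of_norm
  have base := (ML hα0 hα1 (q := (n:ℝ)*α+1) (by positivity) n
    (r := lam * t ^ α) (by positivity)).mul_left (lam ^ n * t ^ ((n:ℝ)*α) / n.factorial)
  refine base.congr (fun k => ?_)
  symm
  rw [Real.norm_eq_abs, abs_mul, abs_Acoef hα0 hlam,
    abs_of_nonneg (Real.rpow_nonneg ht.le _)]
  have e1 : t ^ (((k:ℝ)+n)*α) = t ^ ((n:ℝ)*α) * (t ^ α) ^ k := by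
    rw [← Real.rpow_natCast (t ^ α) k, ← Real.rpow_mul ht.le, ← Real.rpow_add ht]
    congr 1
    ring
  have e2 : ((k:ℝ)+n)*α + 1 = (k:ℝ)*α + ((n:ℝ)*α+1) := by ring
  rw [e1, e2, mul_pow]
  ring

lemma hasDerivAt_pTF {α lam : ℝ} (hα0 : 0 < α) (hα1 : α < 1) (hlam : 0 < lam)
    (n : ℕ) {s : ℝ} (hs : 0 < s) :
    HasDerivAt (fun x => pTF α lam n x)
      (∑' k : ℕ, Acoef α lam n k * ((((k:ℝ)+n)*α) * s ^ ((((k:ℝ)+n)*α) - 1))) s := by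
  set c : ℝ := s / 2 with hc
  set d : ℝ := 2 * s with hd
  set M : ℝ := max 1 d with hM
  have hc0 : 0 < c := by rw [hc]; linarith
  have hM1 : (1:ℝ) ≤ M := le_max_left _ _
  have hM0 : (0:ℝ) < M := by linarith
  have hdM : d ≤ M := le_max_right _ _
  set u : ℕ → ℝ := fun k => |Acoef α lam n k| *
    ((((k:ℝ)+n)*α) * (M ^ ((n:ℝ)*α) * (M ^ α) ^ k / c)) with hu_def
  have hb_nonneg : ∀ k : ℕ, 0 ≤ ((k:ℝ)+n)*α := fun k => by positivity
  have hMb : ∀ k : ℕ, M ^ (((k:ℝ)+n)*α) = M ^ ((n:ℝ)*α) * (M ^ α) ^ k := by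
    intro k
    rw [← Real.rpow_natCast (M ^ α) k, ← Real.rpow_mul hM0.le, ← Real.rpow_add hM0]
    congr 1
    ring
  -- summability of the bound
  have hu : Summable u := by
    apply Summable.of_nonneg_of_le (fun k => by positivity)
      (f := fun k => (lam ^ n * M ^ ((n:ℝ)*α) / (n.factorial * c)) *
        (((k + (n+1)).factorial : ℝ) / k.factorial * (lam * M ^ α) ^ k /
          Real.Gamma ((k:ℝ) * α + ((n:ℝ)*α + 1))))
    · intro k
      have hG : 0 < Real.Gamma (((k:ℝ) + n) * α + 1) := by positivity
      have key : (((k + n).factorial : ℝ)) * (((k:ℝ)+n)*α) ≤ ((k + (n+1)).factorial : ℝ) := by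
        have e1 : (k + (n+1)).factorial = (k + n + 1) * (k + n).factorial := by
          rw [show k + (n+1) = (k + n) + 1 by ring, Nat.factorial_succ]
        rw [e1]
        push_cast
        have h2 : ((k:ℝ)+n)*α ≤ (k:ℝ) + n + 1 := by
          nlinarith [Nat.cast_nonneg (α := ℝ) k, Nat.cast_nonneg (α := ℝ) n]
        nlinarith [(Nat.cast_pos (α := ℝ)).mpr (Nat.factorial_pos (k+n)), h2]
      calc u k = (((k + n).factorial : ℝ) * (((k:ℝ)+n)*α)) *
            (lam ^ n * lam ^ k * M ^ ((n:ℝ)*α) * (M ^ α) ^ k /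
              ((n.factorial : ℝ) * k.factorial * c * Real.Gamma (((k:ℝ) + n) * α + 1))) := by
            simp only [hu_def]
            rw [abs_Acoef hα0 hlam]
            ring
        _ ≤ (((k + (n+1)).factorial : ℝ)) *
            (lam ^ n * lam ^ k * M ^ ((n:ℝ)*α) * (M ^ α) ^ k /
              ((n.factorial : ℝ) * k.factorial * c * Real.Gamma (((k:ℝ) + n) * α + 1))) := by
            apply mul_le_mul_of_nonneg_right key
            positivity
        _ = (lam ^ n * M ^ ((n:ℝ)*α) / (n.factorial * c)) *
            (((k + (n+1)).factorial : ℝ) / k.factorial * (lam * M ^ α) ^ k /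
              Real.Gamma ((k:ℝ) * α + ((n:ℝ)*α + 1))) := by
            rw [show (k:ℝ) * α + ((n:ℝ)*α + 1) = ((k:ℝ) + n) * α + 1 by ring, mul_pow]
            ring
    · exact (ML hα0 hα1 (by positivity) (n+1) (by positivity)).mul_left _
  have key := hasDerivAt_tsum_of_isPreconnected hu isOpen_Ioo
    (isPreconnected_Ioo (a := c) (b := d))
    (g := fun k x => Acoef α lam n k * x ^ (((k:ℝ)+n)*α))
    (g' := fun k x => Acoef α lam n k * ((((k:ℝ)+n)*α) * x ^ ((((k:ℝ)+n)*α) - 1)))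
    (y₀ := s) (y := s) ?_ ?_ ?_ ?_ ?_
  · apply key.congr_of_eventuallyEq
    have hmem : s ∈ Set.Ioo c d := ⟨by rw [hc]; linarith, by rw [hd]; linarith⟩
    filter_upwards [isOpen_Ioo.mem_nhds hmem] with x hx
    exact pTF_eq hα0 n (le_of_lt (lt_trans hc0 hx.1))
  · intro k x hx
    exact (Real.hasDerivAt_rpow_const (Or.inl (ne_of_gt (lt_trans hc0 hx.1)))).const_mul _
  · intro k x hx
    have hx0 : 0 < x := lt_trans hc0 hx.1
    rw [Real.norm_eq_abs, abs_mul]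
    rw [hu_def]
    apply mul_le_mul_of_nonneg_left _ (abs_nonneg _)
    rw [abs_of_nonneg (mul_nonneg (hb_nonneg k) (Real.rpow_nonneg hx0.le _))]
    apply mul_le_mul_of_nonneg_left _ (hb_nonneg k)
    rw [← hMb k, Real.rpow_sub hx0, Real.rpow_one]
    apply div_le_div₀ (Real.rpow_nonneg hM0.le _) _ hc0 (le_of_lt hx.1)
    exact Real.rpow_le_rpow hx0.le (le_trans (le_of_lt hx.2) hdM) (hb_nonneg k)
  · exact ⟨by rw [hc]; linarith, by rw [hd]; linarith⟩
  · exact S1 hα0 hα1 hlam n hs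
  · exact ⟨by rw [hc]; linarith, by rw [hd]; linarith⟩

lemma real_beta {u v : ℝ} (hu : 0 < u) (hv : 0 < v) {t : ℝ} (ht : 0 < t) :
    ∫ s in (0:ℝ)..t, s ^ (u - 1) * (t - s) ^ (v - 1) =
      Real.Gamma u * Real.Gamma v / Real.Gamma (u + v) * t ^ (u + v - 1) := by
  have hGuv : 0 < Real.Gamma (u + v) := Real.Gamma_pos_of_pos (by linarith)
  have key := Complex.betaIntegral_scaled (u : ℂ) (v : ℂ) ht
  have hGG := Complex.Gamma_mul_Gamma_eq_betaIntegral
    (by simpa using hu : 0 < Complex.re (u:ℂ)) (by simpa using hv : 0 < Complex.re (v:ℂ))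
  -- identify complex integral with the real one
  have hre : ∫ s in (0:ℝ)..t, ((s ^ (u - 1) * (t - s) ^ (v - 1) : ℝ) : ℂ) =
      ∫ s in (0:ℝ)..t, (s : ℂ) ^ ((u:ℂ) - 1) * ((t : ℂ) - s) ^ ((v:ℂ) - 1) := by
    apply intervalIntegral.integral_congr
    intro s hs
    rw [Set.uIcc_of_le ht.le] at hs
    push_cast
    rw [Complex.ofReal_cpow hs.1, Complex.ofReal_cpow (by linarith [hs.2] : (0:ℝ) ≤ t - s)]
    push_cast
    ring
  rw [intervalIntegral.integral_ofReal] at hre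
  have hbeta : Complex.betaIntegral u v =
      ((Real.Gamma u * Real.Gamma v / Real.Gamma (u + v) : ℝ) : ℂ) := by
    have h1 : Complex.Gamma ((u:ℂ) + v) ≠ 0 := by
      rw [show ((u:ℂ) + v) = ((u + v : ℝ) : ℂ) by push_cast; ring, Complex.Gamma_ofReal]
      exact_mod_cast hGuv.ne'
    have hb0 : Complex.betaIntegral u v =
        Complex.Gamma u * Complex.Gamma v / Complex.Gamma ((u:ℂ) + v) := by
      rw [eq_div_iff h1, mul_comm]
      exact hGG.symm
    rw [hb0, show ((u:ℂ) + v) = ((u + v : ℝ) : ℂ) by push_cast; ring,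
      Complex.Gamma_ofReal, Complex.Gamma_ofReal, Complex.Gamma_ofReal]
    push_cast
    ring
  have hpow : ((t:ℂ)) ^ ((u:ℂ) + v - 1) = ((t ^ (u + v - 1) : ℝ) : ℂ) := by
    rw [Complex.ofReal_cpow ht.le]
    push_cast
    ring_nf
  rw [← hre, hbeta, hpow] at key
  have h2 : ((∫ s in (0:ℝ)..t, s ^ (u - 1) * (t - s) ^ (v - 1) : ℝ) : ℂ) =
      ((Real.Gamma u * Real.Gamma v / Real.Gamma (u + v) * t ^ (u + v - 1) : ℝ) : ℂ) :=
    key.trans (by push_cast; ring)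
  exact_mod_cast h2

lemma beta_integrable {u v : ℝ} (hu : 0 < u) (hv : 0 < v) {t : ℝ} (ht : 0 < t) :
    IntervalIntegrable (fun s => s ^ (u - 1) * (t - s) ^ (v - 1)) MeasureTheory.volume 0 t := by
  have ht2 : 0 < t / 2 := by linarith
  have part1 : IntervalIntegrable (fun s => s ^ (u - 1) * (t - s) ^ (v - 1))
      MeasureTheory.volume 0 (t/2) := by
    apply IntervalIntegrable.mul_continuousOn
    · exact intervalIntegral.intervalIntegrable_rpow' (by linarith)
    · apply ContinuousOn.rpow_const
      · exact (continuous_const.sub continuous_id).continuousOn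
      · intro s hs
        rw [Set.uIcc_of_le ht2.le] at hs
        left
        exact ne_of_gt (by linarith [hs.2])
  have part2 : IntervalIntegrable (fun s => s ^ (u - 1) * (t - s) ^ (v - 1))
      MeasureTheory.volume (t/2) t := by
    have base : IntervalIntegrable (fun s : ℝ => s ^ (v - 1)) MeasureTheory.volume 0 (t/2) :=
      intervalIntegral.intervalIntegrable_rpow' (by linarith)
    have comp : IntervalIntegrable (fun s : ℝ => (t - s) ^ (v - 1)) MeasureTheory.volume
        (t - 0) (t - t/2) := base.comp_sub_left t
    rw [show t - 0 = t by ring, show t - t/2 = t/2 by ring] at comp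
    have := IntervalIntegrable.continuousOn_mul (g := fun s : ℝ => s ^ (u - 1)) comp.symm ?_
    · exact (by simpa only [mul_comm] using this : _)
    · apply ContinuousOn.rpow_const continuous_id.continuousOn
      intro s hs
      rw [Set.uIcc_of_le (by linarith : t/2 ≤ t)] at hs
      left
      exact ne_of_gt (lt_of_lt_of_le ht2 hs.1)
  exact part1.trans part2

lemma caputo_term_eq {α : ℝ} (hα0 : 0 < α) (hα1 : α < 1) {t : ℝ} (ht : 0 < t)
    (a b : ℝ) (hb : 0 ≤ b) :
    ∫ s in Set.Ioc (0:ℝ) t, (t - s) ^ (-α) * (a * (b * s ^ (b - 1))) =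
      a * (b * Real.Gamma b * Real.Gamma (1 - α) / Real.Gamma (b - α + 1)) * t ^ (b - α) := by
  rcases eq_or_lt_of_le hb with hb0 | hb0
  · simp [← hb0]
  · have heq : ∀ s : ℝ, (t - s) ^ (-α) * (a * (b * s ^ (b - 1))) =
        (a * b) * (s ^ (b - 1) * (t - s) ^ ((1 - α) - 1)) := by
      intro s
      rw [show (1 - α) - 1 = -α by ring]
      ring
    rw [← intervalIntegral.integral_of_le ht.le]
    simp_rw [heq]
    rw [intervalIntegral.integral_const_mul, real_beta hb0 (by linarith) ht]
    rw [show b + (1 - α) - 1 = b - α by ring, show b + (1 - α) = b - α + 1 by ring]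
    ring

lemma caputo_term_integrable {α : ℝ} (hα0 : 0 < α) (hα1 : α < 1) {t : ℝ} (ht : 0 < t)
    (a b : ℝ) (hb : 0 ≤ b) :
    MeasureTheory.IntegrableOn (fun s => (t - s) ^ (-α) * (a * (b * s ^ (b - 1))))
      (Set.Ioc (0:ℝ) t) MeasureTheory.volume := by
  rcases eq_or_lt_of_le hb with hb0 | hb0
  · simp only [← hb0]
    simp
  · have heq : (fun s : ℝ => (t - s) ^ (-α) * (a * (b * s ^ (b - 1)))) =
        (fun s : ℝ => (a * b) * (s ^ (b - 1) * (t - s) ^ ((1 - α) - 1))) := by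
      funext s
      rw [show (1 - α) - 1 = -α by ring]
      ring
    rw [heq]
    rw [← intervalIntegrable_iff_integrableOn_Ioc_of_le ht.le]
    exact (beta_integrable hb0 (by linarith) ht).const_mul _

lemma caputo_pTF {α lam : ℝ} (hα0 : 0 < α) (hα1 : α < 1) (hlam : 0 < lam)
    (n : ℕ) {t : ℝ} (ht : 0 < t) :
    caputo α (fun s => pTF α lam n s) t =
      ∑' k : ℕ, Acoef α lam n k *
        ((((k:ℝ)+n)*α) * Real.Gamma (((k:ℝ)+n)*α) / Real.Gamma (((k:ℝ)+n)*α - α + 1)) *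
        t ^ (((k:ℝ)+n)*α - α) := by
  have hG1α : 0 < Real.Gamma (1 - α) := Real.Gamma_pos_of_pos (by linarith)
  have hbnn : ∀ k : ℕ, 0 ≤ ((k:ℝ)+n)*α := fun k => by positivity
  rw [caputo, intervalIntegral.integral_of_le ht.le]
  have h1 : ∫ s in Set.Ioc (0:ℝ) t, (t - s) ^ (-α) * deriv (fun s => pTF α lam n s) s =
      ∫ s in Set.Ioc (0:ℝ) t, ∑' k : ℕ,
        (t - s) ^ (-α) * (Acoef α lam n k * ((((k:ℝ)+n)*α) * s ^ ((((k:ℝ)+n)*α) - 1))) := by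
    apply MeasureTheory.setIntegral_congr_fun measurableSet_Ioc
    intro s hs
    dsimp only
    rw [(hasDerivAt_pTF hα0 hα1 hlam n hs.1).deriv, ← tsum_mul_left]
  rw [h1]
  -- norm integral values
  have hnorm : ∀ k : ℕ, (∫ s in Set.Ioc (0:ℝ) t,
      ‖(t - s) ^ (-α) * (Acoef α lam n k * ((((k:ℝ)+n)*α) * s ^ ((((k:ℝ)+n)*α) - 1)))‖) =
      |Acoef α lam n k| * ((((k:ℝ)+n)*α) * Real.Gamma (((k:ℝ)+n)*α) * Real.Gamma (1 - α) /
        Real.Gamma (((k:ℝ)+n)*α - α + 1)) * t ^ (((k:ℝ)+n)*α - α) := by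
    intro k
    rw [← caputo_term_eq hα0 hα1 ht (|Acoef α lam n k|) _ (hbnn k)]
    apply MeasureTheory.setIntegral_congr_fun measurableSet_Ioc
    intro s hs
    have h1 : (0:ℝ) ≤ t - s := by linarith [hs.2]
    dsimp only
    rw [Real.norm_eq_abs, abs_mul, abs_mul, abs_of_nonneg (Real.rpow_nonneg h1 _),
      abs_of_nonneg (mul_nonneg (hbnn k) (Real.rpow_nonneg hs.1.le _))]
  have hsum : Summable (fun k : ℕ => ∫ s in Set.Ioc (0:ℝ) t,
      ‖(t - s) ^ (-α) * (Acoef α lam n k * ((((k:ℝ)+n)*α) * s ^ ((((k:ℝ)+n)*α) - 1)))‖) := by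
    simp_rw [hnorm]
    apply Summable.of_nonneg_of_le
      (f := fun k : ℕ => (lam ^ n * Real.Gamma (1 - α) * t ^ (((n:ℝ)-1)*α) / n.factorial) *
        (((k + n).factorial : ℝ) / k.factorial * (lam * t ^ α) ^ k /
          Real.Gamma ((k:ℝ) * α + (((n:ℝ)-1)*α + 1))))
    · intro k
      have : 0 < Real.Gamma (((k:ℝ)+n)*α - α + 1) := Real.Gamma_pos_of_pos (by nlinarith [hbnn k])
      have h2 : 0 ≤ Real.Gamma (((k:ℝ)+n)*α) := Real.Gamma_nonneg_of_nonneg (by positivity)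
      positivity
    · intro k
      have hq : (0:ℝ) < (k:ℝ) * α + (((n:ℝ)-1)*α + 1) := by nlinarith [Nat.cast_nonneg (α := ℝ) k, Nat.cast_nonneg (α := ℝ) n]
      rcases eq_or_lt_of_le (hbnn k) with hb0 | hb0
      · rw [← hb0]
        simp only [Real.Gamma_zero, mul_zero, zero_mul, mul_zero, zero_div, zero_mul]
        have hGq : 0 < Real.Gamma ((k:ℝ) * α + (((n:ℝ)-1)*α + 1)) := Real.Gamma_pos_of_pos hq
        positivity
      · apply le_of_eq
        have hGb1 : Real.Gamma (((k:ℝ)+n)*α + 1) = (((k:ℝ)+n)*α) * Real.Gamma (((k:ℝ)+n)*α) :=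
          Real.Gamma_add_one (ne_of_gt hb0)
        have hGpos : 0 < Real.Gamma (((k:ℝ)+n)*α + 1) := Real.Gamma_pos_of_pos (by positivity)
        rw [abs_Acoef hα0 hlam, ← hGb1]
        have e1 : t ^ (((k:ℝ)+n)*α - α) = t ^ (((n:ℝ)-1)*α) * (t ^ α) ^ k := by
          rw [← Real.rpow_natCast (t ^ α) k, ← Real.rpow_mul ht.le, ← Real.rpow_add ht]
          congr 1
          ring
        have e2 : ((k:ℝ)+n)*α - α + 1 = (k:ℝ) * α + (((n:ℝ)-1)*α + 1) := by ring
        rw [e1, e2, mul_pow]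
        field_simp
    · exact (ML hα0 hα1 (by nlinarith [Nat.cast_nonneg (α := ℝ) n]) n (by positivity)).mul_left _
  rw [← MeasureTheory.integral_tsum_of_summable_integral_norm
    (fun k => caputo_term_integrable hα0 hα1 ht (Acoef α lam n k) _ (hbnn k)) hsum]
  rw [← tsum_mul_left]
  apply tsum_congr
  intro k
  rw [caputo_term_eq hα0 hα1 ht _ _ (hbnn k)]
  calc 1 / Real.Gamma (1-α) * (Acoef α lam n k *
        ((((k:ℝ)+n)*α) * Real.Gamma (((k:ℝ)+n)*α) * Real.Gamma (1-α) /
          Real.Gamma (((k:ℝ)+n)*α - α + 1)) * t ^ (((k:ℝ)+n)*α - α))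
      = (Real.Gamma (1-α) / Real.Gamma (1-α)) * (Acoef α lam n k *
        ((((k:ℝ)+n)*α) * Real.Gamma (((k:ℝ)+n)*α) / Real.Gamma (((k:ℝ)+n)*α - α + 1)) *
        t ^ (((k:ℝ)+n)*α - α)) := by ring
    _ = _ := by rw [div_self (ne_of_gt hG1α), one_mul]

lemma Acoef_mul_Gamma {α lam : ℝ} (hα0 : 0 < α) (n k : ℕ) :
    Acoef α lam n k * Real.Gamma (((k:ℝ)+n)*α + 1) =
      (((k + n).factorial : ℝ) / (n.factorial * k.factorial)) * lam ^ n * (-lam) ^ k := by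
  have hG : Real.Gamma (((k:ℝ)+n)*α + 1) ≠ 0 := by
    have : (0:ℝ) < ((k:ℝ)+n)*α + 1 := by positivity
    exact (Real.Gamma_pos_of_pos this).ne'
  rw [Acoef, div_mul_cancel₀ _ hG]

lemma tsum_D {α lam : ℝ} (hα0 : 0 < α) (hα1 : α < 1) (hlam : 0 < lam)
    (n : ℕ) {t : ℝ} (ht : 0 < t) :
    (∑' k : ℕ, Acoef α lam n k *
        ((((k:ℝ)+n)*α) * Real.Gamma (((k:ℝ)+n)*α) / Real.Gamma (((k:ℝ)+n)*α - α + 1)) *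
        t ^ (((k:ℝ)+n)*α - α)) =
      -lam * (pTF α lam n t - if n = 0 then 0 else pTF α lam (n - 1) t) := by
  -- the "shifted" series
  set Mf : ℕ → ℝ := fun j => Nat.casesOn j 0
    (fun i => -lam * (Acoef α lam n i * t ^ (((i:ℝ)+n)*α))) with hMf
  have hMf_summable : Summable Mf := by
    apply (summable_nat_add_iff 1).mp
    exact ((S1 hα0 hα1 hlam n ht).mul_left (-lam)).congr (fun i => rfl)
  have hMf_sum : ∑' j, Mf j = -lam * pTF α lam n t := by
    rw [Summable.tsum_eq_zero_add hMf_summable]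
    show (0:ℝ) + ∑' i : ℕ, -lam * (Acoef α lam n i * t ^ (((i:ℝ)+n)*α)) = _
    rw [zero_add, tsum_mul_left, ← pTF_eq hα0 n ht.le]
  rcases Nat.eq_zero_or_eq_succ_pred n with hn | hn
  · -- case n = 0
    subst hn
    rw [if_pos rfl, sub_zero]
    rw [← hMf_sum]
    apply tsum_congr
    intro k
    cases k with
    | zero =>
      show Acoef α lam 0 0 * ((((0:ℕ):ℝ)+(0:ℕ))*α * Real.Gamma ((((0:ℕ):ℝ)+(0:ℕ))*α) /
        Real.Gamma ((((0:ℕ):ℝ)+(0:ℕ))*α - α + 1)) * t ^ ((((0:ℕ):ℝ)+(0:ℕ))*α - α) = 0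
      norm_num
    | succ i =>
      show Acoef α lam 0 (i+1) * ((((i+1:ℕ):ℝ)+(0:ℕ))*α * Real.Gamma ((((i+1:ℕ):ℝ)+(0:ℕ))*α) /
          Real.Gamma ((((i+1:ℕ):ℝ)+(0:ℕ))*α - α + 1)) * t ^ ((((i+1:ℕ):ℝ)+(0:ℕ))*α - α) =
        -lam * (Acoef α lam 0 i * t ^ (((i:ℝ)+(0:ℕ))*α))
      have hB : (0:ℝ) < (((i+1:ℕ):ℝ)+(0:ℕ))*α := by positivity
      have e1 : (((i+1:ℕ):ℝ)+(0:ℕ))*α - α = ((i:ℝ)+(0:ℕ))*α := by push_cast; ring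
      have e2 : (((i+1:ℕ):ℝ)+(0:ℕ))*α - α + 1 = ((i:ℝ)+(0:ℕ))*α + 1 := by push_cast; ring
      rw [e2, e1, ← Real.Gamma_add_one (ne_of_gt hB)]
      simp only [Acoef]
      have hG1 : 0 < Real.Gamma ((((i+1:ℕ):ℝ)+(0:ℕ))*α + 1) := Real.Gamma_pos_of_pos (by positivity)
      have hG2 : 0 < Real.Gamma (((i:ℝ)+(0:ℕ))*α + 1) := Real.Gamma_pos_of_pos (by positivity)
      have hf1 : ((i+1).factorial : ℝ) ≠ 0 := by positivity
      have hf2 : ((i).factorial : ℝ) ≠ 0 := by positivity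
      rw [show ((i+1:ℕ) + 0) = i + 1 by ring, show ((i:ℕ) + 0) = i by ring]
      rw [Nat.factorial_succ]
      push_cast
      rw [pow_succ]
      field_simp
  · -- case n = m + 1
    set m : ℕ := n - 1 with hm
    rw [if_neg (by omega)]
    have hnm : n = m + 1 := hn
    have hn' : (n:ℝ) = (m:ℝ) + 1 := by rw [hnm]; push_cast; ring
    have key : ∀ k : ℕ, Acoef α lam n k *
        ((((k:ℝ)+n)*α) * Real.Gamma (((k:ℝ)+n)*α) / Real.Gamma (((k:ℝ)+n)*α - α + 1)) *
        t ^ (((k:ℝ)+n)*α - α) =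
        lam * (Acoef α lam m k * t ^ (((k:ℝ)+m)*α)) + Mf k := by
      intro k
      have hGm : ∀ j : ℕ, 0 < Real.Gamma (((j:ℝ)+(m:ℝ))*α + 1) :=
        fun j => Real.Gamma_pos_of_pos (by positivity)
      have hGn : ∀ j : ℕ, 0 < Real.Gamma (((j:ℝ)+(n:ℝ))*α + 1) :=
        fun j => Real.Gamma_pos_of_pos (by positivity)
      have hfm : ((m).factorial : ℝ) ≠ 0 := by positivity
      have hfn : ((n).factorial : ℝ) ≠ 0 := by positivity
      cases k with
      | zero =>
        show Acoef α lam n 0 * ((((0:ℕ):ℝ)+n)*α * Real.Gamma ((((0:ℕ):ℝ)+n)*α) /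
            Real.Gamma ((((0:ℕ):ℝ)+n)*α - α + 1)) * t ^ ((((0:ℕ):ℝ)+n)*α - α) =
          lam * (Acoef α lam m 0 * t ^ ((((0:ℕ):ℝ)+m)*α)) + 0
        have hB : (0:ℝ) < (((0:ℕ):ℝ)+n)*α := by
          have : (0:ℝ) < (n:ℝ) := by rw [hn']; positivity
          push_cast
          nlinarith
        have e1 : (((0:ℕ):ℝ)+n)*α - α = (((0:ℕ):ℝ)+m)*α := by rw [hn']; push_cast; ring
        have e2 : (((0:ℕ):ℝ)+n)*α - α + 1 = (((0:ℕ):ℝ)+m)*α + 1 := by rw [hn']; push_cast; ring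
        rw [e2, e1, ← Real.Gamma_add_one (ne_of_gt hB)]
        simp only [Acoef]
        have hG1 := hGn 0
        have hG2 := hGm 0
        rw [hnm]
        rw [show (0 + (m+1)) = m + 1 by ring, show ((0:ℕ) + m) = m by ring, Nat.factorial_succ]
        push_cast
        rw [pow_succ]
        field_simp
        ring
      | succ i =>
        show Acoef α lam n (i+1) * ((((i+1:ℕ):ℝ)+n)*α * Real.Gamma ((((i+1:ℕ):ℝ)+n)*α) /
            Real.Gamma ((((i+1:ℕ):ℝ)+n)*α - α + 1)) * t ^ ((((i+1:ℕ):ℝ)+n)*α - α) =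
          lam * (Acoef α lam m (i+1) * t ^ ((((i+1:ℕ):ℝ)+m)*α)) +
          -lam * (Acoef α lam n i * t ^ (((i:ℝ)+n)*α))
        have hB : (0:ℝ) < (((i+1:ℕ):ℝ)+n)*α := by
          have : (0:ℝ) ≤ (n:ℝ) := Nat.cast_nonneg n
          push_cast
          nlinarith [Nat.cast_nonneg (α := ℝ) i]
        have e1 : (((i+1:ℕ):ℝ)+n)*α - α = ((i:ℝ)+n)*α := by push_cast; ring
        have e2 : (((i+1:ℕ):ℝ)+n)*α - α + 1 = ((i:ℝ)+n)*α + 1 := by push_cast; ring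
        have e3 : (((i+1:ℕ):ℝ)+m)*α = ((i:ℝ)+n)*α := by rw [hn']; push_cast; ring
        rw [e2, e1, e3, ← Real.Gamma_add_one (ne_of_gt hB)]
        have hG2 : 0 < Real.Gamma (((i:ℝ)+(n:ℝ))*α + 1) := hGn i
        have hfi : ((i).factorial : ℝ) ≠ 0 := by positivity
        have hfi1 : (((i+1)).factorial : ℝ) ≠ 0 := by positivity
        rw [show Acoef α lam n (i+1) * (Real.Gamma ((((i+1:ℕ):ℝ)+n)*α+1) /
            Real.Gamma (((i:ℝ)+n)*α+1)) * t ^ (((i:ℝ)+n)*α) =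
          (Acoef α lam n (i+1) * Real.Gamma ((((i+1:ℕ):ℝ)+n)*α+1)) * t ^ (((i:ℝ)+n)*α) /
            Real.Gamma (((i:ℝ)+n)*α+1) from by ring]
        rw [Acoef_mul_Gamma hα0]
        simp only [Acoef]
        have e4 : (((i+1:ℕ):ℝ)+m)*α + 1 = ((i:ℝ)+n)*α + 1 := by rw [hn']; push_cast; ring
        rw [e4]
        set G : ℝ := Real.Gamma (((i:ℝ)+n)*α + 1) with hGdef
        have hGne : G ≠ 0 := hG2.ne'
        -- factorial rewrites
        have ef1 : ((i + 1 + n).factorial : ℝ) = ((i:ℝ) + n + 1) * ((i + n).factorial : ℝ) := by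
          rw [show i + 1 + n = (i + n) + 1 by ring, Nat.factorial_succ]
          push_cast
          ring
        have ef2 : (i + 1 + m) = i + n := by omega
        have ef3 : ((n).factorial : ℝ) = ((m:ℝ) + 1) * ((m).factorial : ℝ) := by
          rw [hnm, Nat.factorial_succ]
          push_cast
          ring
        have ef4 : (((i+1)).factorial : ℝ) = ((i:ℝ) + 1) * ((i).factorial : ℝ) := by
          rw [Nat.factorial_succ]
          push_cast
          ring
        rw [ef1, ef2, ef3, ef4, show (-lam)^(i+1) = (-lam)^i * (-lam) from pow_succ _ _,
          show lam^n = lam^m * lam from by rw [hnm, pow_succ]]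
        have hm1 : ((m:ℝ) + 1) ≠ 0 := by positivity
        have hi1 : ((i:ℝ) + 1) ≠ 0 := by positivity
        rw [hn']
        push_cast
        field_simp
        ring
    rw [tsum_congr key, Summable.tsum_add (((S1 hα0 hα1 hlam m ht).mul_left lam).congr (fun k => rfl))
      hMf_summable, hMf_sum]
    have : ∑' k : ℕ, lam * (Acoef α lam m k * t ^ (((k:ℝ)+m)*α)) = lam * pTF α lam m t := by
      rw [tsum_mul_left, ← pTF_eq hα0 m ht.le]
    rw [this]
    ring

theorem tfpp_solves_caputo_dde (α lam : ℝ) (hα0 : 0 < α) (hα1 : α < 1)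
    (hlam : 0 < lam) (n : ℕ) :
    (∀ t : ℝ, 0 < t →
      caputo α (fun s => pTF α lam n s) t =
        -lam * (pTF α lam n t - if n = 0 then 0 else pTF α lam (n - 1) t)) ∧
    pTF α lam 0 0 = 1 ∧ (∀ n' : ℕ, 1 ≤ n' → pTF α lam n' 0 = 0) := by
  refine ⟨fun t ht => ?_, ?_, fun n' hn' => ?_⟩
  · rw [caputo_pTF hα0 hα1 hlam n ht, tsum_D hα0 hα1 hlam n ht]
  · have h0 : (0:ℝ) ^ α = 0 := Real.zero_rpow hα0.ne'
    rw [pTF, h0, mul_zero]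
    rw [tsum_eq_single 0 (by intro k hk; simp [zero_pow hk])]
    norm_num [Real.Gamma_one]
  · have h0 : (0:ℝ) ^ α = 0 := Real.zero_rpow hα0.ne'
    rw [pTF, h0, mul_zero, zero_pow (by omega : n' ≠ 0), zero_div, zero_mul]
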